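/- Let φ(t) = exp(−1/t^{α/2}) for t > 0 with 0 < α. Then |ln φ(t)| = t^{−α/2} for t > 0, and consequently for 0 < α < 1 and any z₁ ∈ ℂ, the planar integral over {|ζ₁| < δ} of |ln φ(| |z₁|² − |ζ₁|² |)| / |z₁ − ζ₁| dA(ζ₁) equals the integral of 1/( | |z₁|² − |ζ₁|² |^{α/2} |z₁ − ζ₁| ) dA(ζ₁) and is finite. -/

import Mathlib

open MeasureTheory Complex Set

/-- `|x| ^ (-β)` is interval integrable when `β < 1`. -/
lemma aux_II_abs_rpow {β : ℝ} (hβ : β < 1) (a b : ℝ) :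
    IntervalIntegrable (fun x : ℝ => |x| ^ (-β)) volume a b := by
  have h0 : ∀ c : ℝ, 0 ≤ c →
      IntervalIntegrable (fun x : ℝ => |x| ^ (-β)) volume 0 c := by
    intro c hc
    have h1 : IntegrableOn (fun x : ℝ => x ^ (-β)) (Ioc 0 c) volume := by
      have := intervalIntegral.intervalIntegrable_rpow' (a := 0) (b := c) (by linarith : (-1:ℝ) < -β)
      rwa [intervalIntegrable_iff, uIoc_of_le hc] at this
    have h2 : IntegrableOn (fun x : ℝ => |x| ^ (-β)) (Ioc 0 c) volume :=
      h1.congr_fun (fun x hx => by rw [abs_of_pos hx.1]) measurableSet_Ioc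
    rwa [intervalIntegrable_iff, uIoc_of_le hc]
  have hall : ∀ c : ℝ, IntervalIntegrable (fun x : ℝ => |x| ^ (-β)) volume 0 c := by
    intro c
    rcases le_total 0 c with hc | hc
    · exact h0 c hc
    · rw [IntervalIntegrable.iff_comp_neg]
      simpa [abs_neg] using h0 (-c) (by linarith)
  exact (hall a).symm.trans (hall b)

/-- 1-D radial integrability: `r * |a - r²|^(-β)` on `(0, δ)` for `0 < β < 1`. -/
lemma aux_radial1D {a β δ : ℝ} (ha : 0 ≤ a) (hβ0 : 0 < β) (hβ1 : β < 1) (hδ : 0 < δ) :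
    IntegrableOn (fun r : ℝ => r * |a - r ^ 2| ^ (-β)) (Ioo 0 δ) volume := by
  set s := Real.sqrt a with hs
  have hs0 : 0 ≤ s := Real.sqrt_nonneg a
  -- majorant
  have hmaj : IntegrableOn (fun r : ℝ => δ ^ (1 - β) * |r - s| ^ (-β)) (Ioo 0 δ) volume := by
    have h1 : IntervalIntegrable (fun x : ℝ => |x - s| ^ (-β)) volume 0 δ := by
      simpa using (aux_II_abs_rpow hβ1 (-s) (δ - s)).comp_sub_right s
    have h2 : IntegrableOn (fun x : ℝ => |x - s| ^ (-β)) (Ioc 0 δ) volume := by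
      rwa [intervalIntegrable_iff, uIoc_of_le hδ.le] at h1
    exact ((h2.mono_set Ioo_subset_Ioc_self)).const_mul _
  apply hmaj.mono'
    ((measurable_id'.mul (((measurable_const.sub (measurable_id'.pow_const 2)).abs).pow
      measurable_const)).aestronglyMeasurable)
  · filter_upwards [ae_restrict_mem measurableSet_Ioo] with r hr
    have hr0 : 0 < r := hr.1
    have hrδ : r < δ := hr.2
    have key : |a - r ^ 2| ^ (-β) ≤ |r - s| ^ (-β) * r ^ (-β) := by
      have hfac : |a - r ^ 2| = |r - s| * (r + s) := by
        have hsq : s ^ 2 = a := Real.sq_sqrt ha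
        have : a - r ^ 2 = (s - r) * (s + r) := by linear_combination -hsq
        rw [this, abs_mul, _root_.abs_of_nonneg (by positivity : (0:ℝ) ≤ s + r), abs_sub_comm]
        ring
      rw [hfac, Real.mul_rpow (abs_nonneg _) (by positivity)]
      refine mul_le_mul_of_nonneg_left ?_ (Real.rpow_nonneg (abs_nonneg _) _)
      rw [Real.rpow_neg (by positivity), Real.rpow_neg hr0.le]
      exact inv_anti₀ (Real.rpow_pos_of_pos hr0 β)
        (Real.rpow_le_rpow hr0.le (by linarith) hβ0.le)
    have hnn : 0 ≤ r * |a - r ^ 2| ^ (-β) := by positivity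
    change ‖r * |a - r ^ 2| ^ (-β)‖ ≤ _
    rw [Real.norm_eq_abs, _root_.abs_of_nonneg hnn]
    calc r * |a - r ^ 2| ^ (-β) ≤ r * (|r - s| ^ (-β) * r ^ (-β)) := by
          exact mul_le_mul_of_nonneg_left key hr0.le
      _ = r ^ (1 - β) * |r - s| ^ (-β) := by
          rw [show (1:ℝ) - β = 1 + (-β) by ring, Real.rpow_add hr0, Real.rpow_one]
          ring
      _ ≤ δ ^ (1 - β) * |r - s| ^ (-β) :=
          mul_le_mul_of_nonneg_right (Real.rpow_le_rpow hr0.le hrδ.le (by linarith))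
            (Real.rpow_nonneg (abs_nonneg _) _)

/-- 2-D radial integrability: `|a - |ζ|²|^(-β)` on a ball, for `0 < β < 1`. -/
lemma aux_radial2D {a β δ : ℝ} (ha : 0 ≤ a) (hβ0 : 0 < β) (hβ1 : β < 1) (hδ : 0 < δ) :
    IntegrableOn (fun ζ : ℂ => |a - ‖ζ‖ ^ 2| ^ (-β))
      (Metric.ball (0:ℂ) δ) volume := by
  -- transfer to ℝ × ℝ
  set T : Set (ℝ × ℝ) := {p | p.1 ^ 2 + p.2 ^ 2 < δ ^ 2} with hT
  have hpre : Complex.measurableEquivRealProd ⁻¹' T = Metric.ball (0:ℂ) δ := by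
    ext ζ
    simp only [mem_preimage, Complex.measurableEquivRealProd_apply, hT, mem_setOf_eq,
      Metric.mem_ball, Complex.dist_eq, sub_zero]
    rw [show ζ.re ^ 2 + ζ.im ^ 2 = ‖ζ‖ ^ 2 by
      rw [Complex.sq_norm, Complex.normSq_apply]; ring]
    exact ⟨fun h => lt_of_pow_lt_pow_left₀ 2 hδ.le h,
      fun h => by
        have := pow_lt_pow_left₀ h (norm_nonneg ζ) (by norm_num : 2 ≠ 0)
        exact this⟩
  have hR : IntegrableOn (fun p : ℝ × ℝ => |a - (p.1 ^ 2 + p.2 ^ 2)| ^ (-β)) T volume := by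
    -- polar coordinates
    set S : Set (ℝ × ℝ) := Ioo 0 δ ×ˢ Ioo (-Real.pi) Real.pi with hS
    have hSmeas : MeasurableSet S := measurableSet_Ioo.prod measurableSet_Ioo
    have hSsub : S ⊆ polarCoord.target := by
      rw [polarCoord_target]
      exact Set.prod_mono Ioo_subset_Ioi_self subset_rfl
    set B : ℝ × ℝ → ℝ × ℝ →L[ℝ] ℝ × ℝ := fun p =>
      LinearMap.toContinuousLinearMap (Matrix.toLin (Module.Basis.finTwoProd ℝ) (Module.Basis.finTwoProd ℝ)
        !![Real.cos p.2, -p.1 * Real.sin p.2; Real.sin p.2, p.1 * Real.cos p.2]) with hB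
    have hBdet : ∀ p, (B p).det = p.1 := by
      intro p
      conv_rhs => rw [← one_mul p.1, ← Real.cos_sq_add_sin_sq p.2]
      simp only [hB, neg_mul, LinearMap.det_toContinuousLinearMap, LinearMap.det_toLin,
        Matrix.det_fin_two_of, sub_neg_eq_add]
      ring
    have hderiv : ∀ p ∈ S, HasFDerivWithinAt polarCoord.symm (B p) S p := fun p _ =>
      (hasFDerivAt_polarCoord_symm p).hasFDerivWithinAt
    have hinj : InjOn polarCoord.symm S := polarCoord.symm.injOn.mono hSsub
    have key : IntegrableOn (fun p : ℝ × ℝ => |a - (p.1 ^ 2 + p.2 ^ 2)| ^ (-β))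
        (polarCoord.symm '' S) volume := by
      rw [integrableOn_image_iff_integrableOn_abs_det_fderiv_smul volume hSmeas hderiv hinj]
      have hprod : IntegrableOn (fun p : ℝ × ℝ =>
          (p.1 * |a - p.1 ^ 2| ^ (-β)) * (1:ℝ)) S volume := by
        rw [hS, IntegrableOn, Measure.volume_eq_prod, ← Measure.prod_restrict]
        exact (aux_radial1D ha hβ0 hβ1 hδ).mul_prod
          (integrableOn_const measure_Ioo_lt_top.ne)
      apply hprod.congr_fun _ hSmeas
      intro p hp
      have hp1 : 0 < p.1 := hp.1.1
      have habs : (polarCoord.symm p).1 ^ 2 + (polarCoord.symm p).2 ^ 2 = p.1 ^ 2 := by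
        rw [polarCoord_symm_apply]
        simp only
        rw [show (p.1 * Real.cos p.2) ^ 2 + (p.1 * Real.sin p.2) ^ 2 =
          p.1 ^ 2 * (Real.sin p.2 ^ 2 + Real.cos p.2 ^ 2) by ring, Real.sin_sq_add_cos_sq,
          mul_one]
      simp only [smul_eq_mul, hBdet, abs_of_pos hp1, habs, mul_one]
    have himg : T ∩ polarCoord.source ⊆ polarCoord.symm '' S := by
      intro x hx
      refine ⟨polarCoord x, ?_, polarCoord.left_inv hx.2⟩
      have hmem := polarCoord.map_source hx.2
      rw [polarCoord_target] at hmem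
      have hx1 : (polarCoord x).1 < δ := by
        have : (polarCoord x).1 = Real.sqrt (x.1 ^ 2 + x.2 ^ 2) := rfl
        rw [this]
        rw [show δ = Real.sqrt (δ ^ 2) by rw [Real.sqrt_sq hδ.le]]
        exact Real.sqrt_lt_sqrt (by positivity) hx.1
      exact ⟨⟨hmem.1, hx1⟩, hmem.2⟩
    have hTS : IntegrableOn (fun p : ℝ × ℝ => |a - (p.1 ^ 2 + p.2 ^ 2)| ^ (-β))
        (T ∩ polarCoord.source) volume := key.mono_set himg
    have hc : volume (polarCoord.source)ᶜ = 0 :=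
      ae_eq_univ.mp polarCoord_source_ae_eq_univ
    have hnull : volume (T \ polarCoord.source) = 0 :=
      measure_mono_null (diff_subset_compl _ _) hc
    rw [← inter_union_diff T polarCoord.source]
    refine hTS.union ?_
    rw [IntegrableOn, Measure.restrict_eq_zero.mpr hnull]
    exact integrable_zero_measure
  have := (Complex.volume_preserving_equiv_real_prod.integrableOn_comp_preimage
    Complex.measurableEquivRealProd.measurableEmbedding
    (f := fun p : ℝ × ℝ => |a - (p.1 ^ 2 + p.2 ^ 2)| ^ (-β)) (s := T)).2 hR
  rw [hpre] at this
  apply this.congr_fun _ Metric.isOpen_ball.measurableSet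
  intro ζ _
  simp only [Function.comp_apply, Complex.measurableEquivRealProd_apply]
  rw [show ζ.re ^ 2 + ζ.im ^ 2 = ‖ζ‖ ^ 2 by
    rw [Complex.sq_norm, Complex.normSq_apply]; ring]

/-- 2-D point singularity: `|z - ζ|^(-q)` on a ball, `0 < q < 2`. -/
lemma aux_pt2D {q : ℝ} (hq0 : 0 < q) (hq2 : q < 2) (z : ℂ) {δ : ℝ} (hδ : 0 < δ) :
    IntegrableOn (fun ζ : ℂ => ‖z - ζ‖ ^ (-q)) (Metric.ball (0:ℂ) δ) volume := by
  have hrad : 0 < δ + ‖z‖ := by positivity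
  have base : IntegrableOn (fun w : ℂ => |(0:ℝ) - ‖w‖ ^ 2| ^ (-(q/2)))
      (Metric.ball (0:ℂ) (δ + ‖z‖)) volume :=
    aux_radial2D le_rfl (by linarith) (by linarith) hrad
  have base' : IntegrableOn (fun w : ℂ => ‖w‖ ^ (-q))
      (Metric.ball (0:ℂ) (δ + ‖z‖)) volume := by
    apply base.congr_fun _ Metric.isOpen_ball.measurableSet
    intro w _
    simp only
    rw [zero_sub, abs_neg, _root_.abs_of_nonneg (by positivity : (0:ℝ) ≤ ‖w‖ ^ 2)]
    rw [← Real.rpow_natCast (‖w‖) 2, ← Real.rpow_mul (norm_nonneg w)]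
    congr 1
    push_cast
    ring
  have hsub : Metric.ball (-z) δ ⊆ Metric.ball (0:ℂ) (δ + ‖z‖) := by
    intro w hw
    rw [Metric.mem_ball] at hw ⊢
    have h1 : dist (-z) (0:ℂ) = ‖z‖ := by
      rw [Complex.dist_eq, sub_zero, norm_neg]
    calc dist w 0 ≤ dist w (-z) + dist (-z) 0 := dist_triangle _ _ _
      _ < δ + ‖z‖ := by rw [h1]; exact add_lt_add_left hw _
  have hball : IntegrableOn (fun w : ℂ => ‖w‖ ^ (-q)) (Metric.ball (-z) δ) volume :=
    base'.mono_set hsub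
  have hemb : MeasurableEmbedding (fun ζ : ℂ => ζ - z) :=
    (Homeomorph.subRight z).isClosedEmbedding.measurableEmbedding
  have hmp : MeasurePreserving (fun ζ : ℂ => ζ - z) volume volume :=
    measurePreserving_sub_right volume z
  have hpre : (fun ζ : ℂ => ζ - z) ⁻¹' Metric.ball (-z) δ = Metric.ball (0:ℂ) δ := by
    ext ζ
    simp only [mem_preimage, Metric.mem_ball, Complex.dist_eq, sub_zero, sub_neg_eq_add,
      sub_add_cancel]
  have := (hmp.integrableOn_comp_preimage hemb
    (f := fun w : ℂ => ‖w‖ ^ (-q)) (s := Metric.ball (-z) δ)).2 hball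
  rw [hpre] at this
  apply this.congr_fun _ Metric.isOpen_ball.measurableSet
  intro ζ _
  simp only [Function.comp_apply]
  rw [norm_sub_rev]


theorem stmt_17 (α δ : ℝ) (hα : 0 < α) (hα1 : α < 1) (hδ : 0 < δ)
    (φ : ℝ → ℝ)
    (hφ : ∀ t : ℝ, 0 < t → φ t = Real.exp (-(1 / t ^ (α / 2))))
    (hφ0 : φ 0 = 0) :
    (∀ t : ℝ, 0 < t → |Real.log (φ t)| = t ^ (-(α / 2))) ∧
    ∀ z₁ : ℂ,
      (∫ ζ₁ in Metric.ball (0:ℂ) δ,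
          |Real.log (φ (|‖z₁‖ ^ 2 - ‖ζ₁‖ ^ 2|))| /
            ‖z₁ - ζ₁‖) =
        (∫ ζ₁ in Metric.ball (0:ℂ) δ,
          1 / (|‖z₁‖ ^ 2 - ‖ζ₁‖ ^ 2| ^ (α / 2) *
            ‖z₁ - ζ₁‖)) ∧
      IntegrableOn
        (fun ζ₁ : ℂ =>
          |Real.log (φ (|‖z₁‖ ^ 2 - ‖ζ₁‖ ^ 2|))| /
            ‖z₁ - ζ₁‖)
        (Metric.ball (0:ℂ) δ) volume := by
  have hα2 : 0 < α / 2 := by linarith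
  have hlog : ∀ t : ℝ, 0 < t → |Real.log (φ t)| = t ^ (-(α / 2)) := by
    intro t ht
    rw [hφ t ht, Real.log_exp, abs_neg, _root_.abs_of_nonneg (by positivity), one_div,
      Real.rpow_neg ht.le]
  refine ⟨hlog, fun z₁ => ?_⟩
  -- pointwise identity between the two integrands
  have hpt : ∀ ζ : ℂ,
      |Real.log (φ (|‖z₁‖ ^ 2 - ‖ζ‖ ^ 2|))| / ‖z₁ - ζ‖ =
      1 / (|‖z₁‖ ^ 2 - ‖ζ‖ ^ 2| ^ (α / 2) * ‖z₁ - ζ‖) := by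
    intro ζ
    set t := |‖z₁‖ ^ 2 - ‖ζ‖ ^ 2| with htdef
    have ht0 : 0 ≤ t := abs_nonneg _
    rcases ht0.eq_or_lt with h | h
    · rw [← h, hφ0, Real.log_zero, abs_zero, zero_div, Real.zero_rpow hα2.ne', zero_mul,
        div_zero]
    · rw [hlog t h, Real.rpow_neg ht0, one_div, mul_inv, div_eq_mul_inv]
  have hieq : (fun ζ : ℂ =>
      |Real.log (φ (|‖z₁‖ ^ 2 - ‖ζ‖ ^ 2|))| / ‖z₁ - ζ‖) =
      fun ζ : ℂ =>
      1 / (|‖z₁‖ ^ 2 - ‖ζ‖ ^ 2| ^ (α / 2) * ‖z₁ - ζ‖) :=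
    funext hpt
  constructor
  · exact integral_congr_ae (Filter.Eventually.of_forall hpt)
  · rw [show (fun ζ₁ : ℂ =>
        |Real.log (φ (|‖z₁‖ ^ 2 - ‖ζ₁‖ ^ 2|))| / ‖z₁ - ζ₁‖) =
        fun ζ₁ : ℂ =>
        1 / (|‖z₁‖ ^ 2 - ‖ζ₁‖ ^ 2| ^ (α / 2) * ‖z₁ - ζ₁‖)
      from hieq]
    -- Young's inequality setup
    set p := (4:ℝ) / (α + 1) with hp
    set q := (4:ℝ) / (3 - α) with hq
    have hα1' : (0:ℝ) < α + 1 := by linarith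
    have h3α : (0:ℝ) < 3 - α := by linarith
    have hpq : p.HolderConjugate q := by
      rw [Real.holderConjugate_iff]
      constructor
      · rw [hp, lt_div_iff₀ hα1']; linarith
      · rw [hp, hq, inv_div, inv_div]; field_simp; ring
    set β := α / 2 * p with hβdef
    have hβeq : β = 2 * α / (α + 1) := by rw [hβdef, hp]; ring
    have hβ0 : 0 < β := by rw [hβeq]; positivity
    have hβ1 : β < 1 := by rw [hβeq, div_lt_one hα1']; linarith
    have hq0 : 0 < q := by positivity
    have hq2 : q < 2 := by rw [hq, div_lt_iff₀ h3α]; linarith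
    have hInt1 : IntegrableOn
        (fun ζ : ℂ => |‖z₁‖ ^ 2 - ‖ζ‖ ^ 2| ^ (-β))
        (Metric.ball (0:ℂ) δ) volume :=
      aux_radial2D (by positivity) hβ0 hβ1 hδ
    have hInt2 : IntegrableOn
        (fun ζ : ℂ => ‖z₁ - ζ‖ ^ (-q))
        (Metric.ball (0:ℂ) δ) volume := aux_pt2D hq0 hq2 z₁ hδ
    have hG : IntegrableOn (fun ζ : ℂ =>
        |‖z₁‖ ^ 2 - ‖ζ‖ ^ 2| ^ (-β) / p +
        ‖z₁ - ζ‖ ^ (-q) / q) (Metric.ball (0:ℂ) δ) volume :=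
      (hInt1.div_const p).add (hInt2.div_const q)
    have hmeas : Measurable (fun ζ : ℂ =>
        1 / (|‖z₁‖ ^ 2 - ‖ζ‖ ^ 2| ^ (α / 2) * ‖z₁ - ζ‖)) := by
      apply measurable_const.div
      apply Measurable.mul
      · exact ((measurable_const.sub
          ((continuous_norm.measurable).pow_const 2)).abs).pow measurable_const
      · exact continuous_norm.measurable.comp (measurable_const.sub measurable_id)
    apply hG.mono' hmeas.aestronglyMeasurable
    filter_upwards with ζ
    set t := |‖z₁‖ ^ 2 - ‖ζ‖ ^ 2| with htdef
    set d := ‖z₁ - ζ‖ with hddef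
    have ht0 : (0:ℝ) ≤ t := abs_nonneg _
    have hd0 : (0:ℝ) ≤ d := norm_nonneg _
    have hval : 1 / (t ^ (α / 2) * d) = t ^ (-(α / 2)) * d ^ (-(1:ℝ)) := by
      rw [Real.rpow_neg ht0, Real.rpow_neg_one, one_div, mul_inv]
    rw [Real.norm_eq_abs, _root_.abs_of_nonneg (by positivity), hval]
    calc t ^ (-(α / 2)) * d ^ (-(1:ℝ)) ≤
        (t ^ (-(α / 2))) ^ p / p + (d ^ (-(1:ℝ))) ^ q / q :=
          Real.young_inequality_of_nonneg (Real.rpow_nonneg ht0 _)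
            (Real.rpow_nonneg hd0 _) hpq
      _ = t ^ (-β) / p + d ^ (-q) / q := by
          rw [← Real.rpow_mul ht0, ← Real.rpow_mul hd0]
          congr 2
          · rw [hβdef]; ring
          · ring
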